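/- For x ∈ [0,1/2], define the shrinkage factor ρ(x) = (1 − x) + (x(x − 2x²) + x(1 − x)(x − 2x²))/(2x³ − 4x² + 1). Then ρ is strictly decreasing on [0,1/2]: for all x, y with 0 ≤ x < y ≤ 1/2, ρ(y) < ρ(x). -/

import Mathlib

theorem shrinkage_factor_strict_anti (x y : ℝ)
    (hx0 : 0 ≤ x) (hxy : x < y) (hy : y ≤ 1/2) :
    (1 - y) + (y*(y - 2*y^2) + y*(1 - y)*(y - 2*y^2)) / (2*y^3 - 4*y^2 + 1) <
    (1 - x) + (x*(x - 2*x^2) + x*(1 - x)*(x - 2*x^2)) / (2*x^3 - 4*x^2 + 1) := by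
  have hx2 : x ≤ 1/2 := le_trans hxy.le hy
  have hy0 : 0 < y := lt_of_le_of_lt hx0 hxy
  have hDx : 0 < 2*x^3 - 4*x^2 + 1 := by nlinarith
  have hDy : 0 < 2*y^3 - 4*y^2 + 1 := by nlinarith
  rw [← sub_pos]
  have key : (1 - x) + (x*(x - 2*x^2) + x*(1 - x)*(x - 2*x^2)) / (2*x^3 - 4*x^2 + 1)
      - ((1 - y) + (y*(y - 2*y^2) + y*(1 - y)*(y - 2*y^2)) / (2*y^3 - 4*y^2 + 1))
      = ((y - x)*(2*x^3 - 4*x^2 + 1)*(2*y^3 - 4*y^2 + 1)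
        + (x*(x - 2*x^2) + x*(1 - x)*(x - 2*x^2))*(2*y^3 - 4*y^2 + 1)
        - (y*(y - 2*y^2) + y*(1 - y)*(y - 2*y^2))*(2*x^3 - 4*x^2 + 1))
        / ((2*x^3 - 4*x^2 + 1)*(2*y^3 - 4*y^2 + 1)) := by
    rw [eq_div_iff (mul_ne_zero hDx.ne' hDy.ne')]
    have e1 := div_mul_cancel₀ (x*(x - 2*x^2) + x*(1 - x)*(x - 2*x^2)) hDx.ne'
    have e2 := div_mul_cancel₀ (y*(y - 2*y^2) + y*(1 - y)*(y - 2*y^2)) hDy.ne'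
    linear_combination (2*y^3 - 4*y^2 + 1) * e1 - (2*x^3 - 4*x^2 + 1) * e2
  rw [key]
  apply div_pos _ (mul_pos hDx hDy)
  have hQ : 0 < 1 - 2*x - 2*y + x^2 + 5*x*y + y^2 - 2*x^2*y - 2*x*y^2 := by
    rcases eq_or_lt_of_le hx0 with h0 | hxpos
    · nlinarith
    · nlinarith [mul_nonneg (by linarith : (0:ℝ) ≤ 1 - 2*x) (by linarith : (0:ℝ) ≤ 1 - 2*y),
        sq_nonneg (x - y), mul_pos hxpos hy0,
        mul_nonneg (mul_nonneg hx0 hy0.le) (by linarith : (0:ℝ) ≤ 3 - 2*(x+y))]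
  nlinarith [mul_pos (sub_pos.mpr hxy) hQ]
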